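/- There is a bijection between positive integer solutions (x1, x2, y1, y2) of the system x1*y1 = x2 + 1, x2*y2 = x1 + 1 and positive integer solutions (x, y, z) of x*y*z = x + y + 1, given by (x1, x2, y1, y2) ↦ (x1, y2, y1). -/
import Mathlib

private abbrev S1 := {p : ℕ × ℕ × ℕ × ℕ // 0 < p.1 ∧ 0 < p.2.1 ∧ 0 < p.2.2.1 ∧ 0 < p.2.2.2 ∧
    p.1 * p.2.2.1 = p.2.1 + 1 ∧ p.2.1 * p.2.2.2 = p.1 + 1}

private abbrev S2 := {q : ℕ × ℕ × ℕ // 0 < q.1 ∧ 0 < q.2.1 ∧ 0 < q.2.2 ∧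
    q.1 * q.2.1 * q.2.2 = q.1 + q.2.1 + 1}

private def myToFun : S1 → S2 := fun ⟨⟨x1, x2, y1, y2⟩, h⟩ =>
  ⟨(x1, y2, y1), by
    obtain ⟨h1, h2, h3, h4, h5, h6⟩ := h
    dsimp only at *
    refine ⟨h1, h4, h3, ?_⟩
    have e : x1 * y2 * y1 = x1 * y1 * y2 := by ring
    rw [e, h5]; nlinarith⟩

private def myInvFun : S2 → S1 := fun ⟨⟨x, y, z⟩, h⟩ =>
  ⟨(x, x * z - 1, z, y), by
    obtain ⟨h1, h2, h3, h4⟩ := h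
    dsimp only at *
    have hky : x * z * y = x + y + 1 := by
      have : x * y * z = x * z * y := by ring
      omega
    have hk : 2 ≤ x * z := by nlinarith
    refine ⟨h1, by omega, h3, h2, by omega, ?_⟩
    have e : (x * z - 1) * y = x * z * y - y := by rw [Nat.sub_mul, one_mul]
    omega⟩

theorem stmt12 :
    ∃ e : {p : ℕ × ℕ × ℕ × ℕ // 0 < p.1 ∧ 0 < p.2.1 ∧ 0 < p.2.2.1 ∧ 0 < p.2.2.2 ∧
        p.1 * p.2.2.1 = p.2.1 + 1 ∧ p.2.1 * p.2.2.2 = p.1 + 1} ≃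
      {q : ℕ × ℕ × ℕ // 0 < q.1 ∧ 0 < q.2.1 ∧ 0 < q.2.2 ∧
        q.1 * q.2.1 * q.2.2 = q.1 + q.2.1 + 1},
      ∀ p, ((e p : ℕ × ℕ × ℕ)) = ((p : ℕ × ℕ × ℕ × ℕ).1,
        (p : ℕ × ℕ × ℕ × ℕ).2.2.2, (p : ℕ × ℕ × ℕ × ℕ).2.2.1) := by
  refine ⟨⟨myToFun, myInvFun, ?_, ?_⟩, ?_⟩
  · rintro ⟨⟨x1, x2, y1, y2⟩, h1, h2, h3, h4, h5, h6⟩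
    simp only [myToFun, myInvFun, Subtype.mk.injEq, Prod.mk.injEq]
    dsimp only at h5 h6 ⊢
    exact ⟨trivial, by omega, trivial⟩
  · rintro ⟨⟨x, y, z⟩, h1, h2, h3, h4⟩
    rfl
  · rintro ⟨⟨x1, x2, y1, y2⟩, h⟩
    rfl
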